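/- Let n ≥ 3, 2 ≤ k ≤ n, and let λ = (λ_1, …, λ_n) ∈ Γ_k satisfy λ_2 ≥ λ_3 ≥ ⋯ ≥ λ_n, λ_1 > 0, λ_n < 0, and λ_1 ≥ δλ_2 for some δ ∈ (0,1]. Then for every 1 ≤ m ≤ k−1: λ_1 · σ_{m−1}(λ|1n) ≥ δ·(m/(n−1))·σ_m(λ|n). (Displays (2.16)–(2.17) in the proof of Lemma 2.7.) -/

import Mathlib

open Finset

noncomputable def esymm {n : ℕ} (lam : Fin n → ℝ) (m : ℤ) : ℝ :=
  if m < 0 then 0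
  else ∑ s ∈ Finset.powersetCard m.toNat Finset.univ, ∏ i ∈ s, lam i

noncomputable def esymmDel {n : ℕ} (lam : Fin n → ℝ) (i : Fin n) (m : ℤ) : ℝ :=
  if m < 0 then 0
  else ∑ s ∈ Finset.powersetCard m.toNat (Finset.univ.erase i), ∏ j ∈ s, lam j

noncomputable def esymmDelSet {n : ℕ} (lam : Fin n → ℝ) (S : Finset (Fin n)) (m : ℤ) : ℝ :=
  if m < 0 then 0
  else ∑ s ∈ Finset.powersetCard m.toNat (Finset.univ \ S), ∏ j ∈ s, lam j

def GardingCone (n k : ℕ) : Set (Fin n → ℝ) :=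
  {lam | ∀ m : ℕ, 1 ≤ m → m ≤ k → 0 < esymm lam (m : ℤ)}

noncomputable def sigmaMat {n : ℕ} (A : Matrix (Fin n) (Fin n) ℝ) (m : ℤ) : ℝ :=
  if m < 0 then 0
  else ∑ s ∈ Finset.powersetCard m.toNat (Finset.univ : Finset (Fin n)),
    (A.submatrix (fun i : {x : Fin n // x ∈ s} => (i : Fin n))
                 (fun j : {x : Fin n // x ∈ s} => (j : Fin n))).det


section NTAux
set_option linter.unusedSectionVars false
set_option maxHeartbeats 1000000

namespace NT
open Finset Polynomial
variable {ι : Type*} [DecidableEq ι]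

noncomputable def E (f : ι → ℝ) (T : Finset ι) (j : ℕ) : ℝ :=
  ∑ s ∈ T.powersetCard j, ∏ i ∈ s, f i

@[simp] lemma E_zero (f : ι → ℝ) (T : Finset ι) : E f T 0 = 1 := by
  simp [E]

lemma E_eq_zero (f : ι → ℝ) {T : Finset ι} {j : ℕ} (h : T.card < j) : E f T j = 0 := by
  simp [E, Finset.powersetCard_eq_empty.2 h]

lemma card_le_of_E_pos {f : ι → ℝ} {T : Finset ι} {j : ℕ} (h : 0 < E f T j) : j ≤ T.card := by
  by_contra hc
  rw [E_eq_zero f (by omega)] at h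
  exact lt_irrefl _ h

lemma E_one (f : ι → ℝ) (T : Finset ι) : E f T 1 = ∑ i ∈ T, f i := by
  rw [E, Finset.powersetCard_one, Finset.sum_map]
  simp

lemma E_insert (f : ι → ℝ) {T : Finset ι} {i : ι} (hi : i ∉ T) (j : ℕ) :
    E f (insert i T) (j+1) = E f T (j+1) + f i * E f T j := by
  have hdisj : Disjoint (Finset.powersetCard (j+1) T)
      ((Finset.powersetCard j T).image (insert i)) := by
    rw [Finset.disjoint_right]
    rintro t ht ht'
    obtain ⟨u, hu, rfl⟩ := Finset.mem_image.1 ht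
    exact hi ((Finset.mem_powersetCard.1 ht').1 (Finset.mem_insert_self i u))
  have hinj : Set.InjOn (insert i) (Finset.powersetCard j T : Set (Finset ι)) := by
    intro u hu v hv huv
    rw [Finset.mem_coe, Finset.mem_powersetCard] at hu hv
    have hiu : i ∉ u := fun h => hi (hu.1 h)
    have hiv : i ∉ v := fun h => hi (hv.1 h)
    rw [← Finset.erase_insert hiu, ← Finset.erase_insert hiv, huv]
  rw [E, Finset.powersetCard_succ_insert hi, Finset.sum_union hdisj, Finset.sum_image hinj]
  congr 1
  rw [E, Finset.mul_sum]
  refine Finset.sum_congr rfl fun u hu => ?_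
  have hiu : i ∉ u := fun h => hi ((Finset.mem_powersetCard.1 hu).1 h)
  rw [Finset.prod_insert hiu]

lemma E_erase (f : ι → ℝ) {T : Finset ι} {i : ι} (hi : i ∈ T) (j : ℕ) :
    E f T (j+1) = E f (T.erase i) (j+1) + f i * E f (T.erase i) j := by
  conv_lhs => rw [← Finset.insert_erase hi]
  exact E_insert f (Finset.notMem_erase _ _) j

lemma E_erase_sub_erase (f : ι → ℝ) {T : Finset ι} {i l : ι} (hi : i ∈ T) (hl : l ∈ T)
    (hil : i ≠ l) (j : ℕ) :
    E f (T.erase i) (j+1) - E f (T.erase l) (j+1) = (f l - f i) * E f ((T.erase i).erase l) j := by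
  have hl' : l ∈ T.erase i := Finset.mem_erase.2 ⟨hil.symm, hl⟩
  have hi' : i ∈ T.erase l := Finset.mem_erase.2 ⟨hil, hi⟩
  have hcomm : (T.erase l).erase i = (T.erase i).erase l := Finset.erase_right_comm
  rw [E_erase f hl' j, E_erase f hi' j, hcomm]
  ring

lemma two_mul_E_two (f : ι → ℝ) (T : Finset ι) :
    2 * E f T 2 = (∑ i ∈ T, f i)^2 - ∑ i ∈ T, (f i)^2 := by
  induction T using Finset.induction_on with
  | empty => simp [E_eq_zero f (show (∅:Finset ι).card < 2 by simp)]
  | @insert a T ha ih =>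
    have h2 : E f (insert a T) 2 = E f T 2 + f a * E f T 1 := E_insert f ha 1
    rw [Finset.sum_insert ha, Finset.sum_insert ha, h2, E_one]
    linear_combination ih

lemma sum_mul_E_erase (f : ι → ℝ) (T : Finset ι) (j : ℕ) :
    ∑ i ∈ T, f i * E f (T.erase i) j = ((j:ℝ)+1) * E f T (j+1) := by
  have L : ∑ i ∈ T, f i * E f (T.erase i) j
      = ∑ p ∈ T.sigma (fun i => (T.erase i).powersetCard j), ∏ a ∈ insert p.1 p.2, f a := by
    rw [Finset.sum_sigma]
    refine Finset.sum_congr rfl fun i hi => ?_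
    rw [E, Finset.mul_sum]
    refine Finset.sum_congr rfl fun s hs => ?_
    have hnotmem : i ∉ s := fun h =>
      Finset.notMem_erase i T ((Finset.mem_powersetCard.1 hs).1 h)
    rw [Finset.prod_insert hnotmem]
  have R : ((j:ℝ)+1) * E f T (j+1)
      = ∑ p ∈ (T.powersetCard (j+1)).sigma (fun s => s), ∏ a ∈ p.1, f a := by
    rw [Finset.sum_sigma, E, Finset.mul_sum]
    refine Finset.sum_congr rfl fun s hs => ?_
    have hcard := (Finset.mem_powersetCard.1 hs).2
    rw [show (∑ x ∈ s, ∏ a ∈ (⟨s, x⟩ : Σ _ : Finset ι, ι).fst, f a) = ∑ _x ∈ s, ∏ a ∈ s, f a from rfl,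
      Finset.sum_const, nsmul_eq_mul, hcard]
    push_cast; ring
  rw [L, R]
  refine Finset.sum_nbij' (i := fun p => ⟨insert p.1 p.2, p.1⟩)
    (j := fun q => ⟨q.2, q.1.erase q.2⟩) ?_ ?_ ?_ ?_ ?_
  · rintro ⟨i, s⟩ hp
    rw [Finset.mem_sigma] at hp
    obtain ⟨hiT, hs⟩ := hp
    rw [Finset.mem_powersetCard] at hs
    have hnotmem : i ∉ s := fun h => Finset.notMem_erase i T (hs.1 h)
    rw [Finset.mem_sigma]
    constructor
    · rw [Finset.mem_powersetCard]
      constructor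
      · exact Finset.insert_subset hiT (hs.1.trans (Finset.erase_subset _ _))
      · rw [Finset.card_insert_of_notMem hnotmem, hs.2]
    · exact Finset.mem_insert_self _ _
  · rintro ⟨s, i⟩ hq
    rw [Finset.mem_sigma] at hq
    obtain ⟨hs, hi⟩ := hq
    rw [Finset.mem_powersetCard] at hs
    rw [Finset.mem_sigma]
    constructor
    · exact hs.1 hi
    · rw [Finset.mem_powersetCard]
      refine ⟨fun a ha => ?_, ?_⟩
      · rw [Finset.mem_erase] at ha ⊢
        exact ⟨ha.1, hs.1 ha.2⟩
      · rw [Finset.card_erase_of_mem hi, hs.2]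
        omega
  · rintro ⟨i, s⟩ hp
    rw [Finset.mem_sigma] at hp
    have hnotmem : i ∉ s := fun h =>
      Finset.notMem_erase i T ((Finset.mem_powersetCard.1 hp.2).1 h)
    simp [Finset.erase_insert hnotmem]
  · rintro ⟨s, i⟩ hq
    rw [Finset.mem_sigma] at hq
    simp [Finset.insert_erase hq.2]
  · rintro ⟨i, s⟩ hp
    rfl

lemma sum_powersetCard_compl {M : Type*} [AddCommMonoid M] {T : Finset ι} {j : ℕ}
    (hj : j ≤ T.card) (F : Finset ι → M) :
    ∑ s ∈ T.powersetCard j, F s = ∑ u ∈ T.powersetCard (T.card - j), F (T \ u) := by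
  refine Finset.sum_nbij' (i := fun s => T \ s) (j := fun u => T \ u) ?_ ?_ ?_ ?_ ?_
  · intro s hs
    rw [Finset.mem_powersetCard] at hs ⊢
    exact ⟨Finset.sdiff_subset, by rw [Finset.card_sdiff_of_subset hs.1, hs.2]⟩
  · intro u hu
    rw [Finset.mem_powersetCard] at hu ⊢
    refine ⟨Finset.sdiff_subset, ?_⟩
    rw [Finset.card_sdiff_of_subset hu.1, hu.2]
    omega
  · intro s hs
    rw [Finset.mem_powersetCard] at hs
    exact Finset.sdiff_sdiff_eq_self hs.1
  · intro u hu
    rw [Finset.mem_powersetCard] at hu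
    exact Finset.sdiff_sdiff_eq_self hu.1
  · intro s hs
    rw [Finset.mem_powersetCard] at hs
    rw [Finset.sdiff_sdiff_eq_self hs.1]

lemma card_filter_powersetCard {T u : Finset ι} (hu : u ⊆ T) {j : ℕ} (hij : u.card ≤ j) :
    ((T.powersetCard j).filter (fun s => u ⊆ s)).card = (T.card - u.card).choose (j - u.card) := by
  rw [← Finset.card_sdiff_of_subset hu, ← Finset.card_powersetCard (j - u.card) (T \ u)]
  refine Finset.card_nbij' (i := fun s => s \ u) (j := fun v => v ∪ u) ?_ ?_ ?_ ?_
  · intro s hs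
    rw [Finset.mem_coe, Finset.mem_filter, Finset.mem_powersetCard] at hs
    rw [Finset.mem_coe, Finset.mem_powersetCard]
    refine ⟨Finset.sdiff_subset_sdiff hs.1.1 (le_refl _), ?_⟩
    rw [Finset.card_sdiff_of_subset hs.2, hs.1.2]
  · intro v hv
    rw [Finset.mem_coe, Finset.mem_powersetCard] at hv
    have hdisj : Disjoint v u := Finset.disjoint_of_subset_left hv.1 (Finset.sdiff_disjoint)
    rw [Finset.mem_coe, Finset.mem_filter, Finset.mem_powersetCard]
    refine ⟨⟨Finset.union_subset (hv.1.trans Finset.sdiff_subset) hu, ?_⟩,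
      Finset.subset_union_right⟩
    rw [Finset.card_union_of_disjoint hdisj, hv.2]
    omega
  · intro s hs
    rw [Finset.mem_coe, Finset.mem_filter] at hs
    exact Finset.sdiff_union_of_subset hs.2
  · intro v hv
    rw [Finset.mem_coe, Finset.mem_powersetCard] at hv
    have hdisj : Disjoint v u := Finset.disjoint_of_subset_left hv.1 (Finset.sdiff_disjoint)
    show (v ∪ u) \ u = v
    rw [Finset.union_sdiff_right]
    exact Finset.sdiff_eq_self_of_disjoint hdisj

lemma filter_powersetCard_empty {T u : Finset ι} {j : ℕ} (h : j < u.card) :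
    (T.powersetCard j).filter (fun s => u ⊆ s) = ∅ := by
  rw [Finset.filter_eq_empty_iff]
  intro s hs hsub
  have h1 := Finset.card_le_card hsub
  have h2 := (Finset.mem_powersetCard.1 hs).2
  omega

lemma E_add_const (f : ι → ℝ) (t : ℝ) (T : Finset ι) (j : ℕ) :
    E (fun a => f a + t) T j
      = ∑ i ∈ Finset.range (j+1), ((T.card - i).choose (j - i) : ℝ) * t^(j-i) * E f T i := by
  have step1 : E (fun a => f a + t) T j
      = ∑ s ∈ T.powersetCard j, ∑ u ∈ s.powerset, (∏ a ∈ u, f a) * t^(j - u.card) := by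
    rw [E]
    refine Finset.sum_congr rfl fun s hs => ?_
    have hcard := (Finset.mem_powersetCard.1 hs).2
    rw [Finset.prod_add]
    refine Finset.sum_congr rfl fun u hu => ?_
    rw [Finset.prod_const]
    congr 2
    rw [Finset.card_sdiff_of_subset (Finset.mem_powerset.1 hu), hcard]
  have hswap : ∀ (s : Finset ι) (u : Finset ι),
      s ∈ T.powersetCard j ∧ u ∈ s.powerset ↔
      s ∈ (T.powersetCard j).filter (fun s => u ⊆ s) ∧ u ∈ T.powerset := by
    intro s u
    simp only [Finset.mem_filter, Finset.mem_powerset, Finset.mem_powersetCard]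
    constructor
    · rintro ⟨⟨h1, h2⟩, h3⟩
      exact ⟨⟨⟨h1, h2⟩, h3⟩, h3.trans h1⟩
    · rintro ⟨⟨⟨h1, h2⟩, h3⟩, h4⟩
      exact ⟨⟨h1, h2⟩, h3⟩
  have step2 : E (fun a => f a + t) T j
      = ∑ u ∈ T.powerset,
          (((T.powersetCard j).filter (fun s => u ⊆ s)).card : ℝ)
            * ((∏ a ∈ u, f a) * t^(j - u.card)) := by
    rw [step1, Finset.sum_comm' hswap]
    refine Finset.sum_congr rfl fun u hu => ?_
    rw [Finset.sum_const, nsmul_eq_mul]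
  have step3 : E (fun a => f a + t) T j
      = ∑ i ∈ Finset.range (T.card + 1), ∑ u ∈ T.powersetCard i,
          (((T.powersetCard j).filter (fun s => u ⊆ s)).card : ℝ)
            * ((∏ a ∈ u, f a) * t^(j - u.card)) := by
    rw [step2, Finset.sum_powerset]
  rw [step3]
  have key : ∀ i : ℕ, i ≤ j → (∑ u ∈ T.powersetCard i,
        (((T.powersetCard j).filter (fun s => u ⊆ s)).card : ℝ)
          * ((∏ a ∈ u, f a) * t^(j - u.card)))
      = ((T.card - i).choose (j - i) : ℝ) * t^(j-i) * E f T i := by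
    intro i hij
    by_cases hic : i ≤ T.card
    · rw [E, Finset.mul_sum]
      refine Finset.sum_congr rfl fun u hu => ?_
      rw [Finset.mem_powersetCard] at hu
      rw [card_filter_powersetCard hu.1 (by omega), hu.2]
      ring
    · rw [Finset.powersetCard_eq_empty.2 (by omega), Finset.sum_empty,
        E_eq_zero f (by omega)]
      ring
  have LHS0 : ∀ i : ℕ, j < i → (∑ u ∈ T.powersetCard i,
        (((T.powersetCard j).filter (fun s => u ⊆ s)).card : ℝ)
          * ((∏ a ∈ u, f a) * t^(j - u.card))) = 0 := by
    intro i hij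
    rw [Finset.sum_congr rfl (fun u hu => ?_), Finset.sum_const_zero]
    rw [Finset.mem_powersetCard] at hu
    rw [filter_powersetCard_empty (by omega : j < u.card)]
    simp
  rcases le_or_gt j T.card with h | h
  · rw [← Finset.sum_subset (Finset.range_subset_range.2 (by omega : j + 1 ≤ T.card + 1)) (fun i _ hni => LHS0 i (by
        simp only [Finset.mem_range] at hni ⊢; omega))]
    exact Finset.sum_congr rfl fun i hi => key i (by simp only [Finset.mem_range] at hi; omega)
  · symm
    rw [← Finset.sum_subset (Finset.range_subset_range.2 (by omega : T.card + 1 ≤ j + 1))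
        (fun i _ hni => ?_)]
    · symm
      exact Finset.sum_congr rfl fun i hi => key i (by simp only [Finset.mem_range] at hi; omega)
    · simp only [Finset.mem_range, not_lt] at hni
      rw [E_eq_zero f (by omega)]
      ring

lemma E_compl_inv (w : ι → ℝ) (T : Finset ι) (hw : ∀ i ∈ T, w i ≠ 0) {j : ℕ} (hj : j ≤ T.card) :
    E w T (T.card - j) = (∏ i ∈ T, w i) * E (fun i => (w i)⁻¹) T j := by
  rw [E, sum_powersetCard_compl (by omega) (fun s => ∏ i ∈ s, w i)]
  have hc : T.card - (T.card - j) = j := by omega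
  rw [hc, E, Finset.mul_sum]
  refine Finset.sum_congr rfl fun u hu => ?_
  rw [Finset.mem_powersetCard] at hu
  have h1 : (∏ i ∈ T \ u, w i) * ∏ i ∈ u, w i = ∏ i ∈ T, w i := Finset.prod_sdiff hu.1
  have h2 : ∏ i ∈ u, (w i)⁻¹ = (∏ i ∈ u, w i)⁻¹ := by
    rw [Finset.prod_inv_distrib]
  have h3 : (∏ i ∈ u, w i) ≠ 0 := Finset.prod_ne_zero_iff.2 fun i hi => hw i (hu.1 hi)
  rw [h2]
  field_simp
  linarith [h1]

-- the top-level Newton consequence for exactly k numbers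

lemma fin_lemma {k : ℕ} (hk2 : 2 ≤ k) (w : Fin k → ℝ)
    (h1 : E w Finset.univ (k-1) = 0) (hk : 0 < E w Finset.univ k) :
    E w Finset.univ (k-2) ≤ 0 := by
  have hcard : (Finset.univ : Finset (Fin k)).card = k := by simp
  have hprod : 0 < ∏ i, w i := by
    have hps := Finset.powersetCard_self (Finset.univ : Finset (Fin k))
    rw [hcard] at hps
    have : E w Finset.univ k = ∏ i, w i := by
      rw [E, hps, Finset.sum_singleton]
    rwa [this] at hk
  have hw : ∀ i ∈ (Finset.univ : Finset (Fin k)), w i ≠ 0 := by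
    intro i _ h0
    rw [Finset.prod_eq_zero (Finset.mem_univ i) h0] at hprod
    exact lt_irrefl _ hprod
  have e1 : E w Finset.univ (k-1) = (∏ i, w i) * E (fun i => (w i)⁻¹) Finset.univ 1 := by
    have : k - 1 = (Finset.univ : Finset (Fin k)).card - 1 := by omega
    rw [this, E_compl_inv w _ hw (by omega)]
  have e2 : E w Finset.univ (k-2) = (∏ i, w i) * E (fun i => (w i)⁻¹) Finset.univ 2 := by
    have : k - 2 = (Finset.univ : Finset (Fin k)).card - 2 := by omega
    rw [this, E_compl_inv w _ hw (by omega)]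
  have hs : ∑ i, (w i)⁻¹ = 0 := by
    rw [e1] at h1
    rcases mul_eq_zero.1 h1 with h | h
    · exact absurd h (ne_of_gt hprod)
    · rwa [E_one] at h
  have h2 : E (fun i => (w i)⁻¹) Finset.univ 2 ≤ 0 := by
    have := two_mul_E_two (fun i => (w i)⁻¹) (Finset.univ : Finset (Fin k))
    rw [hs] at this
    nlinarith [Finset.sum_nonneg (fun i (_ : i ∈ (Finset.univ : Finset (Fin k))) =>
      sq_nonneg ((w i)⁻¹))]
  rw [e2]
  exact mul_nonpos_of_nonneg_of_nonpos (le_of_lt hprod) h2 |>.trans_eq rfl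

lemma multiset_lemma {k : ℕ} (hk2 : 2 ≤ k) (x : Multiset ℝ) (hcard : Multiset.card x = k)
    (h1 : x.esymm (k-1) = 0) (hk : 0 < x.esymm k) : x.esymm (k-2) ≤ 0 := by
  obtain ⟨l, rfl⟩ : ∃ l : List ℝ, x = ↑l := ⟨x.toList, (Multiset.coe_toList x).symm⟩
  have hlen : l.length = k := by simpa using hcard
  subst hlen
  have hx : (l : Multiset ℝ) = Multiset.map l.get (Finset.univ : Finset (Fin l.length)).val := by
    rw [Fin.univ_val_map, List.ofFn_get]
  rw [hx] at h1 hk ⊢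
  rw [Finset.esymm_map_val] at h1 hk ⊢
  exact fin_lemma hk2 l.get (by exact h1) (by exact hk)

lemma newton_step {T : Finset ι} (ν : ι → ℝ) {k : ℕ} (hk2 : 2 ≤ k) (hkN : k ≤ T.card)
    (h1 : E ν T (k-1) = 0) (h2 : 0 < E ν T (k-2)) : E ν T k ≤ 0 := by
  by_contra hpos
  push_neg at hpos
  set N := T.card with hN
  set f : ℝ[X] := ∏ a ∈ T, (X + C (ν a)) with hf
  have hfcoeff : ∀ j : ℕ, j ≤ N → f.coeff (N - j) = E ν T j := by
    intro j hj
    rw [hf, Finset.prod_X_add_C_coeff T ν (by omega : N - j ≤ T.card)]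
    have h : T.card - (N - j) = j := by omega
    rw [h]
    rfl
  have hfprod : f = ((T.val.map (fun a => -ν a)).map (fun r => X - C r)).prod := by
    rw [hf, Finset.prod, Multiset.map_map]
    congr 1
    apply Multiset.map_congr rfl
    intro a _
    simp [sub_eq_add_neg]
  have hroots : f.roots = T.val.map (fun a => -ν a) := by
    rw [hfprod, roots_multiset_prod_X_sub_C]
  have hcardroots : Multiset.card f.roots = N := by
    rw [hroots, Multiset.card_map]
    rfl
  have hdegf : f.natDegree = N := by
    rw [hfprod, natDegree_multiset_prod_X_sub_C_eq_card, Multiset.card_map]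
    rfl
  set g : ℝ[X] := derivative^[N - k] f with hg
  have hdegg : g.natDegree ≤ k := by
    have h := Polynomial.natDegree_iterate_derivative f (N - k)
    rw [hdegf] at h
    rw [← hg] at h
    omega
  have hrootsg : k ≤ Multiset.card g.roots := by
    have key : ∀ M : ℕ, Multiset.card f.roots ≤ Multiset.card ((derivative^[M]) f).roots + M := by
      intro M
      induction M with
      | zero => simp
      | succ M ih =>
        have h := Polynomial.card_roots_le_derivative (derivative^[M] f)
        rw [Function.iterate_succ_apply']
        omega
    have h := key (N - k)
    rw [hcardroots, ← hg] at h
    omega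
  have hcardg : Multiset.card g.roots = k :=
    le_antisymm (le_trans (Polynomial.card_roots' g) hdegg) hrootsg
  have hdegg' : g.natDegree = k :=
    le_antisymm hdegg (le_trans hrootsg (Polynomial.card_roots' g))
  have hgcoeff : ∀ j : ℕ, j ≤ k →
      g.coeff j = (((j + (N-k)).descFactorial (N-k) : ℕ) : ℝ) * E ν T (k - j) := by
    intro j hj
    rw [hg, Polynomial.coeff_iterate_derivative, nsmul_eq_mul]
    congr 1
    have h : j + (N - k) = N - (k - j) := by omega
    rw [h, hfcoeff (k-j) (by omega)]
  have hlead : g.leadingCoeff = ((N.descFactorial (N-k) : ℕ) : ℝ) := by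
    rw [Polynomial.leadingCoeff, hdegg', hgcoeff k (le_refl _)]
    have h1' : k + (N - k) = N := by omega
    have h2' : k - k = 0 := by omega
    rw [h1', h2', E_zero, mul_one]
  have hdescpos : ∀ m : ℕ, N - k ≤ m → (0:ℝ) < ((m.descFactorial (N-k) : ℕ) : ℝ) := by
    intro m hm
    have : m.descFactorial (N-k) ≠ 0 := by
      intro h0
      have := Nat.descFactorial_eq_zero_iff_lt.1 h0
      omega
    exact_mod_cast Nat.pos_of_ne_zero this
  have hfact := Polynomial.C_leadingCoeff_mul_prod_multiset_X_sub_C (p := g)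
    (hcardg.trans hdegg'.symm)
  set x : Multiset ℝ := g.roots.map (fun r => -r) with hx
  have hxprod : (x.map (fun r => X + C r)).prod = (g.roots.map (fun r => X - C r)).prod := by
    rw [hx, Multiset.map_map]
    congr 1
    apply Multiset.map_congr rfl
    intro r _
    simp [sub_eq_add_neg]
  have hxcard : Multiset.card x = k := by rw [hx, Multiset.card_map]; exact hcardg
  have hrel : ∀ j : ℕ, j ≤ k →
      ((N.descFactorial (N-k) : ℕ) : ℝ) * x.esymm j
        = ((((k-j) + (N-k)).descFactorial (N-k) : ℕ) : ℝ) * E ν T j := by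
    intro j hj
    have hco : (x.map (fun r => X + C r)).prod.coeff (k - j) = x.esymm j := by
      rw [Multiset.prod_X_add_C_coeff x (by omega : k - j ≤ Multiset.card x), hxcard]
      congr 1
      omega
    have hgc : g.coeff (k - j) = g.leadingCoeff * x.esymm j := by
      conv_lhs => rw [← hfact]
      rw [← hxprod, Polynomial.coeff_C_mul, hco]
    rw [← hlead, ← hgc, hgcoeff (k - j) (by omega)]
    congr 2
    omega
  have hleadpos := hdescpos N (by omega)
  -- derive esymm facts
  have hx1 : x.esymm (k-1) = 0 := by
    have h := hrel (k-1) (by omega)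
    rw [h1] at h
    have := hleadpos
    nlinarith [h]
  have hxk : 0 < x.esymm k := by
    have h := hrel k (le_refl _)
    have hc := hdescpos ((k-k) + (N-k)) (by omega)
    nlinarith [h]
  have hxk2 : 0 < x.esymm (k-2) := by
    have h := hrel (k-2) (by omega)
    have hc := hdescpos ((k-(k-2)) + (N-k)) (by omega)
    nlinarith [h]
  have := multiset_lemma hk2 x hxcard hx1 hxk
  linarith

lemma E_pos_of_pos {f : ι → ℝ} {T : Finset ι} (hf : ∀ a ∈ T, 0 < f a) {j : ℕ}
    (hj : j ≤ T.card) : 0 < E f T j := by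
  rw [E]
  apply Finset.sum_pos
  · intro s hs
    rw [Finset.mem_powersetCard] at hs
    exact Finset.prod_pos fun a ha => hf a (hs.1 ha)
  · exact Finset.powersetCard_nonempty.2 hj

lemma key_pos : ∀ k : ℕ, 1 ≤ k → ∀ (f : ι → ℝ) (T : Finset ι),
    (∀ j, 1 ≤ j → j ≤ k → 0 < E f T j) → ∀ i ∈ T, 0 < E f (T.erase i) (k-1) := by
  intro k
  induction k using Nat.strong_induction_on with
  | _ k IH =>
  intro hk1 f T hyp i hi
  rcases Nat.lt_or_ge k 2 with hk2 | hk2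
  · -- k = 1
    have : k = 1 := by omega
    subst this
    simp
  -- k ≥ 2
  have hkcard : k ≤ T.card := card_le_of_E_pos (hyp k (by omega) (le_refl _))
  -- (a) the whole ray stays in the cone
  have hA : ∀ t : ℝ, 0 ≤ t → ∀ j, 1 ≤ j → j ≤ k → 0 < E (fun a => f a + t) T j := by
    intro t ht j h1j hjk
    rw [E_add_const, Finset.sum_range_succ]
    have hlast : ((T.card - j).choose (j - j) : ℝ) * t^(j-j) * E f T j = E f T j := by
      simp [Nat.sub_self]
    rw [hlast]
    have hrest : 0 ≤ ∑ i' ∈ Finset.range j,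
        ((T.card - i').choose (j - i') : ℝ) * t^(j-i') * E f T i' := by
      apply Finset.sum_nonneg
      intro i' hi'
      rw [Finset.mem_range] at hi'
      have hEi' : 0 ≤ E f T i' := by
        rcases Nat.eq_zero_or_pos i' with h | h
        · subst h; simp
        · exact le_of_lt (hyp i' h (by omega))
      exact mul_nonneg (mul_nonneg (Nat.cast_nonneg _) (pow_nonneg ht _)) hEi'
    linarith [hyp j h1j hjk]
  -- (b) never zero along the ray
  have hnz : ∀ t : ℝ, 0 ≤ t → E (fun a => f a + t) (T.erase i) (k-1) ≠ 0 := by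
    intro t ht h0
    have hyp' : ∀ j, 1 ≤ j → j ≤ k - 1 → 0 < E (fun a => f a + t) T j :=
      fun j a b => hA t ht j a (by omega)
    have hk2' : 0 < E (fun a => f a + t) (T.erase i) (k-2) := by
      have h := IH (k-1) (by omega) (by omega) _ T hyp' i hi
      have : k - 1 - 1 = k - 2 := by omega
      rwa [this] at h
    have hEk : 0 < E (fun a => f a + t) (T.erase i) k := by
      have hid := E_erase (fun a => f a + t) hi (k-1)
      have hkk : k - 1 + 1 = k := by omega
      rw [hkk] at hid
      have hTk := hA t ht k (by omega) (le_refl _)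
      rw [hid, h0] at hTk
      linarith
    have hcard' : k ≤ (T.erase i).card := card_le_of_E_pos hEk
    have := newton_step (T := T.erase i) _ hk2 hcard' h0 hk2'
    linarith
  -- (c) positivity for large t
  set t0 : ℝ := 1 + ∑ a ∈ T, |f a| with ht0
  have ht0nn : 0 ≤ t0 := by
    have : 0 ≤ ∑ a ∈ T, |f a| := Finset.sum_nonneg fun a _ => abs_nonneg _
    rw [ht0]; linarith
  have hbig : 0 < E (fun a => f a + t0) (T.erase i) (k-1) := by
    apply E_pos_of_pos
    · intro a ha
      have haT : a ∈ T := Finset.mem_of_mem_erase ha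
      have h1 : |f a| ≤ ∑ b ∈ T, |f b| :=
        Finset.single_le_sum (fun b _ => abs_nonneg (f b)) haT
      have h2 : -f a ≤ |f a| := neg_le_abs _
      rw [ht0]; linarith
    · rw [Finset.card_erase_of_mem hi]; omega
  -- (d) IVT
  set φ : ℝ → ℝ := fun t => ∑ i' ∈ Finset.range k,
      (((T.erase i).card - i').choose (k - 1 - i') : ℝ) * t^(k-1-i') * E f (T.erase i) i'
    with hφdef
  have hφ : ∀ t : ℝ, φ t = E (fun a => f a + t) (T.erase i) (k-1) := by
    intro t
    rw [E_add_const]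
    have : k - 1 + 1 = k := by omega
    rw [this]
  have hcont : Continuous φ := by
    apply continuous_finset_sum
    intro i' _
    fun_prop
  have hgoal : E f (T.erase i) (k-1) = φ 0 := by
    rw [hφ 0]
    congr 1
    funext a
    rw [add_zero]
  rw [hgoal]
  by_contra hneg
  push_neg at hneg
  have hne0 : φ 0 ≠ 0 := by
    rw [hφ 0]
    have h := hnz 0 (le_refl 0)
    convert h using 2
  have hlt : φ 0 < 0 := lt_of_le_of_ne hneg hne0
  have hmem : (0:ℝ) ∈ Set.Icc (φ 0) (φ t0) := by
    constructor
    · linarith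
    · rw [hφ t0]; linarith
  obtain ⟨c, hc, hφc⟩ := intermediate_value_Icc ht0nn hcont.continuousOn hmem
  exact hnz c hc.1 (by rw [← hφ c]; exact hφc)

lemma erase_pos {k : ℕ} {f : ι → ℝ} {T : Finset ι}
    (hyp : ∀ j, 1 ≤ j → j ≤ k → 0 < E f T j) {i : ι} (hi : i ∈ T) :
    ∀ j, j ≤ k - 1 → 0 < E f (T.erase i) j := by
  intro j hj
  rcases Nat.eq_zero_or_pos j with h | h
  · subst h; simp
  · have hres := key_pos (j+1) (by omega) f T (fun j' a b => hyp j' a (by omega)) i hi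
    simpa using hres

lemma main_aux (n k : ℕ) (hn : 3 ≤ n) (hk2 : 2 ≤ k)
    (lam : Fin n → ℝ) (δ : ℝ) (hδ0 : 0 < δ) (hδ1 : δ ≤ 1)
    (e0 e1 en : Fin n) (h0 : (e0:ℕ) = 0) (h1 : (e1:ℕ) = 1) (hn' : (en:ℕ) = n - 1)
    (hyp : ∀ j, 1 ≤ j → j ≤ k → 0 < E lam Finset.univ j)
    (hsort : ∀ i j : Fin n, 1 ≤ (i : ℕ) → i ≤ j → lam j ≤ lam i)
    (h1pos : 0 < lam e0) (hnneg : lam en < 0) (hδlam : lam e0 ≥ δ * lam e1)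
    (m : ℕ) (hm1 : 1 ≤ m) (hmk : m ≤ k - 1) :
    lam e0 * E lam ((Finset.univ.erase en).erase e0) (m-1)
      ≥ δ * ((m:ℝ)/((n:ℝ)-1)) * E lam (Finset.univ.erase en) m := by
  set T0 := Finset.univ.erase en with hT0
  have hNcard : T0.card = n - 1 := by
    rw [hT0, Finset.card_erase_of_mem (Finset.mem_univ _), Finset.card_univ, Fintype.card_fin]
  have POS1 : ∀ j, j ≤ k → 0 < E lam T0 j := by
    intro j hj
    induction j with
    | zero => simp
    | succ j ihj =>
      have hident := E_erase lam (Finset.mem_univ en) j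
      have hprev := ihj (by omega)
      have hEuniv := hyp (j+1) (by omega) hj
      have hmul : 0 < (-lam en) * E lam T0 j := mul_pos (by linarith) hprev
      rw [← hT0] at hident
      nlinarith [hident]
  have hne0n : e0 ≠ en := fun h => by rw [h, hn'] at h0; omega
  have hne1n : e1 ≠ en := fun h => by rw [h, hn'] at h1; omega
  have hne01 : e0 ≠ e1 := fun h => by rw [h, h1] at h0; omega
  have he0T0 : e0 ∈ T0 := Finset.mem_erase.2 ⟨hne0n, Finset.mem_univ _⟩
  have he1T0 : e1 ∈ T0 := Finset.mem_erase.2 ⟨hne1n, Finset.mem_univ _⟩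
  have hmax_aux : ∀ i ∈ T0, i ≠ e0 → lam i ≤ lam e1 := by
    intro i hiT hie0
    have hival : 1 ≤ (i:ℕ) := by
      by_contra hc
      exact hie0 (Fin.ext (by omega))
    exact hsort e1 i (by omega) (by rw [Fin.le_def]; omega)
  obtain ⟨i0, hi0T0, hi0max, hi0e⟩ :
      ∃ i0 ∈ T0, (∀ i ∈ T0, lam i ≤ lam i0) ∧ (i0 = e0 ∨ (i0 = e1 ∧ lam e0 < lam e1)) := by
    rcases lt_or_ge (lam e0) (lam e1) with h | h
    · refine ⟨e1, he1T0, fun i hiT => ?_, Or.inr ⟨rfl, h⟩⟩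
      by_cases hie0 : i = e0
      · subst hie0; linarith
      · exact hmax_aux i hiT hie0
    · refine ⟨e0, he0T0, fun i hiT => ?_, Or.inl rfl⟩
      by_cases hie0 : i = e0
      · subst hie0; exact le_refl _
      · exact (hmax_aux i hiT hie0).trans h
  have hT0hyp : ∀ j, 1 ≤ j → j ≤ k → 0 < E lam T0 j := fun j _ hj => POS1 j hj
  have hP1 : ∀ i ∈ T0, ∀ j, j ≤ k - 1 → 0 < E lam (T0.erase i) j :=
    fun i hi => erase_pos hT0hyp hi
  have hP2 : ∀ i ∈ T0, ∀ l ∈ T0.erase i, ∀ j, j ≤ k - 2 → 0 < E lam ((T0.erase i).erase l) j := by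
    intro i hi l hl j hj
    exact erase_pos (k := k-1) (fun j' h1' hj' => hP1 i hi j' hj') hl j (by omega)
  have hmm : m - 1 + 1 = m := by omega
  -- step 2
  have step2 : ∀ i ∈ T0, lam i * E lam (T0.erase i) (m-1) ≤ lam i0 * E lam (T0.erase i0) (m-1) := by
    intro i hiT
    by_cases heq : i = i0
    · subst heq; exact le_refl _
    · have hidi := E_erase lam hiT (m-1)
      have hidi0 := E_erase lam hi0T0 (m-1)
      have hdiff := E_erase_sub_erase lam hiT hi0T0 heq (m-1)
      rw [hmm] at hidi hidi0 hdiff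
      have hEpos : 0 ≤ E lam ((T0.erase i).erase i0) (m-1) :=
        le_of_lt (hP2 i hiT i0 (Finset.mem_erase.2 ⟨fun h => heq h.symm, hi0T0⟩) (m-1) (by omega))
      have hle : lam i ≤ lam i0 := hi0max i hiT
      have hprodpos : 0 ≤ (lam i0 - lam i) * E lam ((T0.erase i).erase i0) (m-1) :=
        mul_nonneg (by linarith) hEpos
      linarith
  -- step 1
  have step1 : ∑ i ∈ T0, lam i * E lam (T0.erase i) (m-1) = (m:ℝ) * E lam T0 m := by
    have h := sum_mul_E_erase lam T0 (m-1)
    rw [hmm] at h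
    rw [h]
    congr 1
    rw [Nat.cast_sub hm1]
    ring
  have hsum_le : (m:ℝ) * E lam T0 m ≤ ((n:ℝ)-1) * (lam i0 * E lam (T0.erase i0) (m-1)) := by
    rw [← step1]
    calc ∑ i ∈ T0, lam i * E lam (T0.erase i) (m-1)
        ≤ ∑ _i ∈ T0, lam i0 * E lam (T0.erase i0) (m-1) := Finset.sum_le_sum step2
      _ = ((n:ℝ)-1) * (lam i0 * E lam (T0.erase i0) (m-1)) := by
          rw [Finset.sum_const, nsmul_eq_mul, hNcard, Nat.cast_sub (by omega)]
          norm_num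
  -- step 3
  have hEi0pos : 0 < E lam (T0.erase i0) (m-1) := hP1 i0 hi0T0 (m-1) (by omega)
  have hEe0pos : 0 < E lam (T0.erase e0) (m-1) := hP1 e0 he0T0 (m-1) (by omega)
  have step3 : δ * (lam i0 * E lam (T0.erase i0) (m-1)) ≤ lam e0 * E lam (T0.erase e0) (m-1) := by
    rcases hi0e with h | ⟨h, hlt⟩
    · rw [h]
      nlinarith [mul_pos h1pos hEe0pos]
    · rw [h]
      have hEE : E lam (T0.erase e1) (m-1) ≤ E lam (T0.erase e0) (m-1) := by
        rcases Nat.lt_or_ge m 2 with hm2 | hm2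
        · have : m - 1 = 0 := by omega
          rw [this]
          simp
        · have hdiff := E_erase_sub_erase lam he0T0 he1T0 hne01 (m-2)
          have hmm2 : m - 2 + 1 = m - 1 := by omega
          rw [hmm2] at hdiff
          have hEpos : 0 ≤ E lam ((T0.erase e0).erase e1) (m-2) :=
            le_of_lt (hP2 e0 he0T0 e1 (Finset.mem_erase.2 ⟨fun h => hne01 h.symm, he1T0⟩)
              (m-2) (by omega))
          nlinarith [mul_nonneg (by linarith : (0:ℝ) ≤ lam e1 - lam e0) hEpos]
      have h1' : δ * lam e1 * E lam (T0.erase e1) (m-1) ≤ lam e0 * E lam (T0.erase e1) (m-1) := by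
        have := hP1 e1 he1T0 (m-1) (by omega)
        nlinarith
      have h2' : lam e0 * E lam (T0.erase e1) (m-1) ≤ lam e0 * E lam (T0.erase e0) (m-1) :=
        mul_le_mul_of_nonneg_left hEE (le_of_lt h1pos)
      calc δ * (lam e1 * E lam (T0.erase e1) (m-1))
          = δ * lam e1 * E lam (T0.erase e1) (m-1) := by ring
        _ ≤ lam e0 * E lam (T0.erase e1) (m-1) := h1'
        _ ≤ lam e0 * E lam (T0.erase e0) (m-1) := h2'
  -- conclude
  have hn1pos : (0:ℝ) < (n:ℝ) - 1 := by
    have : (3:ℝ) ≤ (n:ℝ) := by exact_mod_cast hn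
    linarith
  rw [ge_iff_le]
  have heq1 : δ * ((m:ℝ)/((n:ℝ)-1)) * E lam T0 m
      = (δ * ((m:ℝ) * E lam T0 m)) / ((n:ℝ)-1) := by ring
  rw [heq1, div_le_iff₀ hn1pos]
  have h6 := mul_le_mul_of_nonneg_left hsum_le (le_of_lt hδ0)
  nlinarith [step3]

end NT
end NTAux

set_option maxHeartbeats 1000000 in
/-- Displays (2.16)–(2.17): if n ≥ 3, 2 ≤ k ≤ n, λ ∈ Γ_k with λ₂ ≥ ⋯ ≥ λₙ,
λ₁ > 0, λₙ < 0 and λ₁ ≥ δλ₂ for some δ ∈ (0,1], then for every 1 ≤ m ≤ k−1,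
λ₁·σ_{m−1}(λ|1n) ≥ δ·(m/(n−1))·σ_m(λ|n). -/
theorem lam1_mul_esymmDel_ge (n k : ℕ) (hn : 3 ≤ n) (hk2 : 2 ≤ k) (hkn : k ≤ n)
    (lam : Fin n → ℝ) (δ : ℝ) (hδ0 : 0 < δ) (hδ1 : δ ≤ 1)
    (hlam : lam ∈ GardingCone n k)
    (hsort : ∀ i j : Fin n, 1 ≤ (i : ℕ) → i ≤ j → lam j ≤ lam i)
    (h1pos : 0 < lam ⟨0, by omega⟩)
    (hnneg : lam ⟨n - 1, by omega⟩ < 0)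
    (hδlam : lam ⟨0, by omega⟩ ≥ δ * lam ⟨1, by omega⟩) :
    ∀ m : ℕ, 1 ≤ m → m ≤ k - 1 →
      lam ⟨0, by omega⟩ *
          esymmDelSet lam {⟨0, by omega⟩, ⟨n - 1, by omega⟩} ((m : ℤ) - 1)
        ≥ δ * ((m : ℝ) / ((n : ℝ) - 1)) * esymmDel lam ⟨n - 1, by omega⟩ (m : ℤ) := by
  intro m hm1 hmk
  have hyp : ∀ j, 1 ≤ j → j ≤ k → 0 < NT.E lam Finset.univ j := by
    intro j h1 h2
    have h := hlam j h1 h2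
    rwa [esymm, if_neg (by omega : ¬ (j:ℤ) < 0), Int.toNat_natCast] at h
  have hdel : esymmDel lam ⟨n-1, by omega⟩ (m:ℤ)
      = NT.E lam (Finset.univ.erase (⟨n-1, by omega⟩ : Fin n)) m := by
    rw [esymmDel, if_neg (by omega : ¬ (m:ℤ) < 0), Int.toNat_natCast]; rfl
  have hdelset : esymmDelSet lam {⟨0, by omega⟩, ⟨n-1, by omega⟩} ((m:ℤ)-1)
      = NT.E lam ((Finset.univ.erase (⟨n-1, by omega⟩ : Fin n)).erase ⟨0, by omega⟩) (m-1) := by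
    rw [esymmDelSet, if_neg (by omega : ¬ ((m:ℤ)-1 < 0))]
    have ht : ((m:ℤ)-1).toNat = m - 1 := by omega
    rw [ht]
    have hset : (Finset.univ \ ({⟨0, by omega⟩, ⟨n-1, by omega⟩} : Finset (Fin n)))
        = (Finset.univ.erase (⟨n-1, by omega⟩ : Fin n)).erase ⟨0, by omega⟩ := by
      ext a
      simp only [Finset.mem_sdiff, Finset.mem_erase, Finset.mem_insert, Finset.mem_univ,
        Finset.mem_singleton, true_and, and_true]
      tauto
    rw [hset]
    rfl
  rw [hdel, hdelset]
  exact NT.main_aux n k hn hk2 lam δ hδ0 hδ1 ⟨0, by omega⟩ ⟨1, by omega⟩ ⟨n-1, by omega⟩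
    rfl rfl rfl hyp hsort h1pos hnneg hδlam m hm1 hmk
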